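/- arXiv:1912.12850 — 2 statements merged into one kernel-verified Lean document; each statement's English description precedes it below -/
import Mathlib

section
/- Let k, n, s be positive integers and let a_1, ..., a_k be integers with (a_i, n^s)_s = 1 for i = 1, ..., k. Then the sum of (m_1 − a_1, m_2 − a_2, ..., m_k − a_k, n^s)_s, taken over all tuples with 1 ≤ m_i ≤ n^s and (m_i, n^s)_s = 1 for each i, equals Φ_s(n^s)^k · Σ_{d | n} 1 / Φ_s(d^s)^{k−1}, where the sum on the right is over all positive divisors d of n. -/
/-- The generalized gcd of a nonnegative integer `n` at level `s`: the largest
`s`-th power `l ^ s` (with `l ≥ 1`) dividing `n`.  Applying it to `n = gcd(a, b)`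
gives the generalized gcd `(a, b)_s` of the paper. -/
def sPowGcd (s n : ℕ) : ℕ := (Nat.findGreatest (fun l => l ^ s ∣ n) n) ^ s

/-- Klee's function `Φ_s(n)`: the number of `1 ≤ m ≤ n` with `(m, n)_s = 1`. -/
def klee (s n : ℕ) : ℕ :=
  ((Finset.Icc 1 n).filter (fun m => sPowGcd s (Nat.gcd m n) = 1)).card

open Finset Nat ArithmeticFunction
open scoped ArithmeticFunction.Moebius

lemma lcm_pow_dvd {a b N s : ℕ} (hs : 0 < s) (hN : N ≠ 0) (ha : a ^ s ∣ N) (hb : b ^ s ∣ N) :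
    Nat.lcm a b ^ s ∣ N := by
  have ha0 : a ≠ 0 := by rintro rfl; exact hN (zero_dvd_iff.mp (by simpa [zero_pow hs.ne'] using ha))
  have hb0 : b ≠ 0 := by rintro rfl; exact hN (zero_dvd_iff.mp (by simpa [zero_pow hs.ne'] using hb))
  have hl0 : Nat.lcm a b ≠ 0 := Nat.lcm_ne_zero ha0 hb0
  rw [← Nat.factorization_le_iff_dvd (pow_ne_zero _ hl0) hN]
  rw [← Nat.factorization_le_iff_dvd (pow_ne_zero _ ha0) hN] at ha
  rw [← Nat.factorization_le_iff_dvd (pow_ne_zero _ hb0) hN] at hb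
  rw [Nat.factorization_pow, Nat.factorization_lcm ha0 hb0]
  rw [Nat.factorization_pow] at ha hb
  intro p
  have h1 := ha p
  have h2 := hb p
  simp only [Finsupp.smul_apply, Finsupp.sup_apply, smul_eq_mul] at *
  rcases le_total (a.factorization p) (b.factorization p) with h | h
  · simpa [sup_eq_right.mpr h] using h2
  · simpa [sup_eq_left.mpr h] using h1

section base
variable {s N : ℕ}

lemma spow_base_pos (hN : 0 < N) : 0 < Nat.findGreatest (fun l => l ^ s ∣ N) N :=
  Nat.le_findGreatest hN (by simpa using one_dvd N)

lemma spow_base_pow_dvd (hN : 0 < N) : (Nat.findGreatest (fun l => l ^ s ∣ N) N) ^ s ∣ N :=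
  Nat.findGreatest_spec (P := fun l => l ^ s ∣ N) (m := 1) hN (by simp)

lemma le_spow_base (hs : 0 < s) (hN : 0 < N) {l : ℕ} (hl : l ^ s ∣ N) :
    l ≤ Nat.findGreatest (fun l => l ^ s ∣ N) N :=
  Nat.le_findGreatest (le_trans (Nat.le_self_pow hs.ne' l) (Nat.le_of_dvd hN hl)) hl

lemma dvd_spow_base (hs : 0 < s) (hN : 0 < N) {l : ℕ} (hl : l ^ s ∣ N) :
    l ∣ Nat.findGreatest (fun l => l ^ s ∣ N) N := by
  set D := Nat.findGreatest (fun l => l ^ s ∣ N) N with hD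
  have h1 : Nat.lcm l D ^ s ∣ N := lcm_pow_dvd hs hN.ne' hl (spow_base_pow_dvd hN)
  have h2 : Nat.lcm l D ≤ D := le_spow_base hs hN h1
  have h3 : D ∣ Nat.lcm l D := Nat.dvd_lcm_right _ _
  have hl0 : 0 < l := by
    rcases Nat.eq_zero_or_pos l with rfl | h
    · exact absurd (zero_dvd_iff.mp (by simpa [zero_pow hs.ne'] using hl)) hN.ne'
    · exact h
  have hlcm : 0 < Nat.lcm l D := Nat.lcm_pos hl0 (spow_base_pos hN)
  have h4 : Nat.lcm l D = D := Nat.le_antisymm h2 (Nat.le_of_dvd hlcm h3)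
  exact h4 ▸ Nat.dvd_lcm_left _ _

lemma sPowGcd_eq_one_iff (hs : 0 < s) (hN : 0 < N) :
    sPowGcd s N = 1 ↔ ∀ p : ℕ, p.Prime → ¬ p ^ s ∣ N := by
  unfold sPowGcd
  set D := Nat.findGreatest (fun l => l ^ s ∣ N) N with hD
  constructor
  · intro h p hp hpd
    have h1 : p ≤ D := le_spow_base hs hN hpd
    have h2 : D = 1 := by
      exact (pow_eq_one_iff.mp h).resolve_right hs.ne'
    have := hp.two_le
    omega
  · intro h
    have hD1 : D = 1 := by
      by_contra hne
      have hpos := spow_base_pos (s := s) hN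
      have h2 : 2 ≤ D := by omega
      obtain ⟨p, hp, hpd⟩ := Nat.exists_prime_and_dvd (by omega : D ≠ 1)
      exact h p hp (dvd_trans (pow_dvd_pow_of_dvd hpd s) (spow_base_pow_dvd hN))
    rw [hD1, one_pow]
end base

lemma nat_dvd_int_gcd {k : ℕ} {x y : ℤ} : k ∣ Int.gcd x y ↔ (k : ℤ) ∣ x ∧ (k : ℤ) ∣ y := by
  constructor
  · intro h
    exact ⟨(Int.natCast_dvd_natCast.mpr h).trans (Int.gcd_dvd_left _ _), 
      (Int.natCast_dvd_natCast.mpr h).trans (Int.gcd_dvd_right _ _)⟩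
  · rintro ⟨h1, h2⟩
    exact Int.natCast_dvd_natCast.mp (Int.dvd_coe_gcd h1 h2)

lemma cond_nat_iff {s n m : ℕ} (hs : 0 < s) (hn : 0 < n) :
    sPowGcd s (Nat.gcd m (n ^ s)) = 1 ↔ ∀ p : ℕ, p.Prime → p ∣ n → ¬ p ^ s ∣ m := by
  rw [sPowGcd_eq_one_iff hs (Nat.gcd_pos_of_pos_right _ (pow_pos hn s))]
  constructor
  · intro h p hp hpn hpm
    exact h p hp (Nat.dvd_gcd hpm (pow_dvd_pow_of_dvd hpn s))
  · intro h p hp hpd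
    exact h p hp ((Nat.pow_dvd_pow_iff hs.ne').mp (hpd.trans (Nat.gcd_dvd_right _ _)))
      (hpd.trans (Nat.gcd_dvd_left _ _))

lemma cond_int_iff {s e : ℕ} (hs : 0 < s) (he : 0 < e) {b : ℤ} :
    sPowGcd s (Int.gcd b ((e : ℤ) ^ s)) = 1 ↔ ∀ p : ℕ, p.Prime → p ∣ e → ¬ (p : ℤ) ^ s ∣ b := by
  have hpos : 0 < Int.gcd b ((e : ℤ) ^ s) := by
    rw [Int.gcd_pos_iff]
    right
    exact pow_ne_zero _ (Int.natCast_ne_zero.mpr he.ne')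
  rw [sPowGcd_eq_one_iff hs hpos]
  constructor
  · intro h p hp hpe hpb
    refine h p hp (nat_dvd_int_gcd.mpr ⟨by push_cast; exact hpb, ?_⟩)
    push_cast
    exact pow_dvd_pow_of_dvd (Int.natCast_dvd_natCast.mpr hpe) s
  · intro h p hp hpd
    obtain ⟨h1, h2⟩ := nat_dvd_int_gcd.mp hpd
    push_cast at h1 h2
    have : (p : ℤ) ∣ (e : ℤ) := (Int.pow_dvd_pow_iff hs.ne').mp h2
    exact h p hp (by exact_mod_cast this) h1

lemma prod_pow_dvd {m s : ℕ} : ∀ T : Finset ℕ, (∀ p ∈ T, p.Prime ∧ p ^ s ∣ m) →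
    (∏ p ∈ T, p) ^ s ∣ m := by
  intro T
  induction T using Finset.induction_on with
  | empty => intro _; simpa using one_dvd m
  | @insert a T' ha ih =>
    intro hT
    rw [Finset.prod_insert ha, mul_pow]
    have hcop : Nat.Coprime (a ^ s) ((∏ p ∈ T', p) ^ s) := by
      apply Nat.Coprime.pow
      apply Nat.Coprime.prod_right
      intro p hp
      exact (Nat.coprime_primes (hT a (Finset.mem_insert_self _ _)).1
        (hT p (Finset.mem_insert_of_mem hp)).1).mpr (by rintro rfl; exact ha hp)
    exact hcop.mul_dvd_of_dvd_of_dvd (hT a (Finset.mem_insert_self _ _)).2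
      (ih fun p hp => hT p (Finset.mem_insert_of_mem hp))

open scoped Classical in
lemma moebius_indicator {s n m : ℕ} (hs : 0 < s) (hn : 0 < n) :
    (∑ d ∈ n.divisors, if d ^ s ∣ m then (μ d : ℤ) else 0)
      = if ∀ p : ℕ, p.Prime → p ∣ n → ¬ p ^ s ∣ m then 1 else 0 := by
  classical
  have hstep1 : (∑ d ∈ n.divisors, if d ^ s ∣ m then (μ d : ℤ) else 0)
      = ∑ d ∈ n.divisors with Squarefree d, (if d ^ s ∣ m then (μ d : ℤ) else 0) := by
    rw [Finset.sum_filter_of_ne]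
    intro d _ hd
    by_contra hsq
    rw [ArithmeticFunction.moebius_eq_zero_of_not_squarefree hsq] at hd
    simp at hd
  rw [hstep1, Nat.sum_divisors_filter_squarefree hn.ne', Nat.factors_eq]
  set P : Finset ℕ := n.primeFactors.filter (fun p => p ^ s ∣ m) with hP
  have hPF : ((n.primeFactorsList : Multiset ℕ)).toFinset = n.primeFactors := by
    simp [Nat.toFinset_factors]
  rw [show ((n.primeFactorsList : Multiset ℕ)).toFinset.powerset
      = n.primeFactors.powerset by rw [hPF]]
  have hstep2 : ∀ T ∈ n.primeFactors.powerset,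
      (if (T.val.prod) ^ s ∣ m then (μ T.val.prod : ℤ) else 0)
        = if T ⊆ P then (-1 : ℤ) ^ T.card else 0 := by
    intro T hT
    rw [Finset.mem_powerset] at hT
    have hprimes : ∀ p ∈ T, p.Prime := fun p hp => Nat.prime_of_mem_primeFactors (hT hp)
    rw [Finset.prod_val, Function.id_def]
    have hiff : (∏ p ∈ T, p) ^ s ∣ m ↔ T ⊆ P := by
      constructor
      · intro h p hp
        rw [hP, Finset.mem_filter]
        exact ⟨hT hp, dvd_trans (pow_dvd_pow_of_dvd (Finset.dvd_prod_of_mem _ hp) s) h⟩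
      · intro h
        exact prod_pow_dvd T (fun p hp => ⟨hprimes p hp, (Finset.mem_filter.mp (h hp)).2⟩)
    have hmu : (μ (∏ p ∈ T, p) : ℤ) = (-1 : ℤ) ^ T.card := by
      rw [ArithmeticFunction.IsMultiplicative.map_prod_of_prime
        ArithmeticFunction.isMultiplicative_moebius T hprimes]
      rw [Finset.prod_congr rfl (fun p hp => ArithmeticFunction.moebius_apply_prime (hprimes p hp))]
      simp
    rw [hmu]
    by_cases h : T ⊆ P
    · rw [if_pos (hiff.mpr h), if_pos h]
    · rw [if_neg (fun hd => h (hiff.mp hd)), if_neg h]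
  rw [Finset.sum_congr rfl hstep2, ← Finset.sum_filter]
  have hPP : n.primeFactors.powerset.filter (fun T => T ⊆ P) = P.powerset := by
    ext T
    simp only [Finset.mem_filter, Finset.mem_powerset]
    constructor
    · rintro ⟨_, h2⟩; exact h2
    · intro h; exact ⟨h.trans (Finset.filter_subset _ _), h⟩
  rw [hPP, Finset.sum_powerset_neg_one_pow_card]
  have : P = ∅ ↔ ∀ p : ℕ, p.Prime → p ∣ n → ¬ p ^ s ∣ m := by
    rw [Finset.filter_eq_empty_iff]
    constructor
    · intro h p hp hpn hpm
      exact h (Nat.mem_primeFactors.mpr ⟨hp, hpn, hn.ne'⟩) hpm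
    · intro h p hp
      obtain ⟨h1, h2, _⟩ := Nat.mem_primeFactors.mp hp
      exact h p h1 h2
  by_cases h : P = ∅
  · rw [if_pos h, if_pos (this.mp h)]
  · rw [if_neg h, if_neg (fun hc => h (this.mpr hc))]

lemma count_residue_Icc {T L : ℕ} (hT : 0 < T) (b : ℤ) :
    ((Finset.Icc 1 (T * L)).filter (fun m : ℕ => (T : ℤ) ∣ (m : ℤ) - b)).card = L := by
  classical
  set r : ℕ := (b % (T : ℤ)).toNat with hr
  have hT' : (T : ℤ) ≠ 0 := by exact_mod_cast hT.ne'
  have hbr : (r : ℤ) = b % (T : ℤ) := Int.toNat_of_nonneg (Int.emod_nonneg b hT')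
  have hrT : r < T := by
    have h1 := Int.emod_lt_of_pos b (by exact_mod_cast hT : (0:ℤ) < (T:ℤ))
    have h2 : (r : ℤ) < (T : ℤ) := hbr ▸ h1
    exact_mod_cast h2
  have hcond : ∀ m : ℕ, ((T : ℤ) ∣ (m : ℤ) - b) ↔ m % T = r := by
    intro m
    have key : ((m % T : ℕ) : ℤ) = (m : ℤ) % (T : ℤ) := Int.natCast_mod m T
    rw [Int.dvd_iff_emod_eq_zero, ← Int.emod_eq_emod_iff_emod_sub_eq_zero]
    constructor
    · intro h
      exact Int.natCast_inj.mp (key.trans (h.trans hbr.symm))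
    · intro h
      rw [← key, h, hbr]
  have hfe : (Finset.Icc 1 (T * L)).filter (fun m : ℕ => (T : ℤ) ∣ (m : ℤ) - b)
      = (Finset.Icc 1 (T * L)).filter (fun m => m % T = r) := by
    ext m
    simp only [Finset.mem_filter, Finset.mem_Icc, hcond]
  rw [hfe]
  have key : ((Finset.Icc 1 (T * L)).filter (fun m => m % T = r)).card = (Finset.range L).card := by
    set r' : ℕ := if r = 0 then T else r with hr'
    have hr'1 : 1 ≤ r' := by rw [hr']; split <;> omega
    have hr'T : r' ≤ T := by rw [hr']; split <;> omega
    have hr'r : r' % T = r := by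
      rw [hr']; split
      · rename_i h; rw [Nat.mod_self, h]
      · exact Nat.mod_eq_of_lt hrT
    apply Finset.card_nbij' (i := fun m => (m - 1) / T) (j := fun x => T * x + r')
    · -- maps to range L
      intro m hm
      simp only [Finset.mem_coe, Finset.mem_filter, Finset.mem_Icc] at hm
      obtain ⟨⟨h1, h2⟩, _⟩ := hm
      simp only [Finset.mem_coe, Finset.mem_range]
      rw [Nat.div_lt_iff_lt_mul hT]
      calc m - 1 < m := by omega
      _ ≤ L * T := by rw [Nat.mul_comm]; exact h2
    · -- maps back
      intro x hx
      simp only [Finset.mem_coe, Finset.mem_range] at hx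
      simp only [Finset.mem_coe, Finset.mem_filter, Finset.mem_Icc]
      refine ⟨⟨by omega, ?_⟩, ?_⟩
      · calc T * x + r' ≤ T * x + T := by omega
        _ = T * (x + 1) := by ring
        _ ≤ T * L := Nat.mul_le_mul_left T (by omega)
      · rw [Nat.mul_add_mod, hr'r]
    · -- left inverse
      intro m hm
      beta_reduce
      simp only [Finset.mem_coe, Finset.mem_filter, Finset.mem_Icc] at hm
      obtain ⟨⟨h1, h2⟩, h3⟩ := hm
      have hdm : T * (m / T) + r = m := by rw [← h3]; exact Nat.div_add_mod m T
      by_cases h0 : r = 0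
      · rw [h0, Nat.add_zero] at hdm
        have hu : 1 ≤ m / T := by
          by_contra hc
          push_neg at hc
          interval_cases h : m / T
          · omega
        obtain ⟨u', hu'⟩ : ∃ u', m / T = u' + 1 := ⟨m / T - 1, by omega⟩
        rw [hu', Nat.mul_add, Nat.mul_one] at hdm
        have hm1 : m - 1 = T * u' + (T - 1) := by omega
        rw [hm1, Nat.mul_add_div hT u' (T-1), Nat.div_eq_of_lt (show T-1 < T by omega), Nat.add_zero]
        have : r' = T := by rw [hr', if_pos h0]
        rw [this]
        omega
      · have hm1 : m - 1 = T * (m / T) + (r - 1) := by omega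
        rw [hm1, Nat.mul_add_div hT (m / T) (r-1), Nat.div_eq_of_lt (show r-1 < T by omega), Nat.add_zero]
        have : r' = r := by rw [hr', if_neg h0]
        rw [this]
        omega
    · -- right inverse
      intro x hx
      beta_reduce
      rw [show T * x + r' - 1 = T * x + (r' - 1) by omega, Nat.mul_add_div hT x (r'-1),
        Nat.div_eq_of_lt (show r'-1 < T by omega), Nat.add_zero]
  rw [key, Finset.card_range]


open scoped Classical

lemma count_dvd_Icc {T M : ℕ} (hT : 0 < T) (hTM : T ∣ M) :
    ((Finset.Icc 1 M).filter (fun m => T ∣ m)).card = M / T := by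
  obtain ⟨L, rfl⟩ := hTM
  rw [Nat.mul_div_cancel_left L hT]
  refine Eq.trans ?_ (count_residue_Icc (L := L) hT 0)
  congr 1
  ext m
  simp [Int.natCast_dvd_natCast]

lemma klee_pos {s N : ℕ} (hN : 0 < N) : 0 < klee s N := by
  apply Finset.card_pos.mpr
  refine ⟨1, Finset.mem_filter.mpr ⟨Finset.mem_Icc.mpr ⟨le_refl 1, hN⟩, ?_⟩⟩
  rw [Nat.gcd_one_left]
  unfold sPowGcd
  rw [Nat.findGreatest_eq (by simp), one_pow]

lemma klee_moebius {s n : ℕ} (hs : 0 < s) (hn : 0 < n) :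
    (klee s (n ^ s) : ℤ) = ∑ d ∈ n.divisors, (μ d : ℤ) * ((n ^ s / d ^ s : ℕ) : ℤ) := by
  have hns : 0 < n ^ s := pow_pos hn s
  have h1 : klee s (n ^ s) = ((Finset.Icc 1 (n ^ s)).filter
      (fun m => ∀ p : ℕ, p.Prime → p ∣ n → ¬ p ^ s ∣ m)).card := by
    unfold klee
    congr 1
    apply Finset.filter_congr
    intro m _
    simpa using cond_nat_iff hs hn
  rw [h1, Finset.card_filter]
  rw [Nat.cast_sum]
  simp only [Nat.cast_ite, Nat.cast_one, Nat.cast_zero]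
  rw [Finset.sum_congr rfl (fun m _ => (moebius_indicator hs hn (m := m)).symm), Finset.sum_comm]
  apply Finset.sum_congr rfl
  intro d hd
  obtain ⟨hdn, _⟩ := Nat.mem_divisors.mp hd
  have hd0 : 0 < d := Nat.pos_of_mem_divisors hd
  rw [← Finset.sum_filter, Finset.sum_const, ← count_dvd_Icc (pow_pos hd0 s)
    (pow_dvd_pow_of_dvd hdn s)]
  rw [nsmul_eq_mul, mul_comm]

lemma sum_klee {s D : ℕ} (hs : 0 < s) (hD : 0 < D) :
    ∑ e ∈ D.divisors, (klee s (e ^ s) : ℤ) = (D : ℤ) ^ s := by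
  set P : ArithmeticFunction ℤ := ((ArithmeticFunction.pow s : ArithmeticFunction ℕ) :
    ArithmeticFunction ℤ) with hP
  have key : ∀ e ∈ D.divisors, (klee s (e ^ s) : ℤ)
      = (ArithmeticFunction.moebius * P) e := by
    intro e he
    have he0 : 0 < e := Nat.pos_of_mem_divisors he
    rw [klee_moebius hs he0, ArithmeticFunction.mul_apply,
      Nat.sum_divisorsAntidiagonal (f := fun a b => (μ a : ℤ) * P b)]
    apply Finset.sum_congr rfl
    intro d hd
    have hdn : d ∣ e := (Nat.mem_divisors.mp hd).1
    congr 1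
    rw [hP, ArithmeticFunction.natCoe_apply, ArithmeticFunction.pow_apply,
      if_neg (by simp [hs.ne'] : ¬(s = 0 ∧ e / d = 0)), Nat.div_pow hdn]
  rw [Finset.sum_congr rfl key, ← ArithmeticFunction.coe_mul_zeta_apply,
    mul_right_comm, ArithmeticFunction.moebius_mul_coe_zeta, one_mul, hP,
    ArithmeticFunction.natCoe_apply, ArithmeticFunction.pow_apply,
    if_neg (by simp [hs.ne'] : ¬(s = 0 ∧ D = 0))]
  push_cast
  rfl

lemma weight_decomp {s n : ℕ} (hs : 0 < s) (hn : 0 < n) (G : ℕ) :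
    ((sPowGcd s (Nat.gcd G (n ^ s))) : ℤ)
      = ∑ e ∈ n.divisors, if e ^ s ∣ G then (klee s (e ^ s) : ℤ) else 0 := by
  have hN : 0 < Nat.gcd G (n ^ s) := Nat.gcd_pos_of_pos_right _ (pow_pos hn s)
  set N := Nat.gcd G (n ^ s) with hNdef
  set Dv := Nat.findGreatest (fun l => l ^ s ∣ N) N with hDv
  have hfilter : n.divisors.filter (fun e => e ^ s ∣ G) = Dv.divisors := by
    ext e
    simp only [Nat.mem_divisors, Finset.mem_filter]
    constructor
    · rintro ⟨⟨hen, _⟩, heG⟩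
      exact ⟨dvd_spow_base hs hN (Nat.dvd_gcd heG (pow_dvd_pow_of_dvd hen s)),
        (spow_base_pos hN).ne'⟩
    · rintro ⟨heD, _⟩
      have hDs : Dv ^ s ∣ N := spow_base_pow_dvd hN
      have h1 : e ^ s ∣ N := dvd_trans (pow_dvd_pow_of_dvd heD s) hDs
      refine ⟨⟨?_, hn.ne'⟩, h1.trans (Nat.gcd_dvd_left _ _)⟩
      have h2 : Dv ^ s ∣ n ^ s := hDs.trans (Nat.gcd_dvd_right _ _)
      exact dvd_trans heD ((Nat.pow_dvd_pow_iff hs.ne').mp h2)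
  rw [← Finset.sum_filter, hfilter, sum_klee hs (spow_base_pos hN)]
  show ((sPowGcd s N : ℕ) : ℤ) = _
  unfold sPowGcd
  push_cast
  rfl

lemma inner_count {s n d e : ℕ} (hs : 0 < s) (hn : 0 < n) (hd : d ∣ n) (he : e ∣ n)
    {b : ℤ} (hb : ∀ p : ℕ, p.Prime → p ∣ e → ¬ (p : ℤ) ^ s ∣ b) :
    ((Finset.Icc 1 (n ^ s)).filter
      (fun m : ℕ => d ^ s ∣ m ∧ (e : ℤ) ^ s ∣ (m : ℤ) - b)).card
    = if Nat.Coprime d e then n ^ s / (d * e) ^ s else 0 := by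
  by_cases hcop : Nat.Coprime d e
  · rw [if_pos hcop]
    have hicop : IsCoprime ((d : ℤ) ^ s) ((e : ℤ) ^ s) :=
      IsCoprime.pow (Int.isCoprime_iff_gcd_eq_one.mpr (by simpa using hcop))
    obtain ⟨u, v, huv⟩ := hicop
    set c : ℤ := b * (u * (d : ℤ) ^ s) with hc
    have hc1 : (d : ℤ) ^ s ∣ c := ⟨b * u, by rw [hc]; ring⟩
    have hc2 : (e : ℤ) ^ s ∣ c - b := ⟨-(b * v), by rw [hc]; linear_combination b * huv⟩
    have hiff : ∀ m : ℕ, (d ^ s ∣ m ∧ (e : ℤ) ^ s ∣ (m : ℤ) - b)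
        ↔ (((d * e) ^ s : ℕ) : ℤ) ∣ (m : ℤ) - c := by
      intro m
      have hcast : (((d * e) ^ s : ℕ) : ℤ) = (d : ℤ) ^ s * (e : ℤ) ^ s := by push_cast; ring
      rw [hcast]
      constructor
      · rintro ⟨h1, h2⟩
        have h1' : (d : ℤ) ^ s ∣ (m : ℤ) - c := by
          refine dvd_sub ?_ hc1
          exact_mod_cast Int.natCast_dvd_natCast.mpr h1
        have h2' : (e : ℤ) ^ s ∣ (m : ℤ) - c := by
          have hmc : (m : ℤ) - c = ((m : ℤ) - b) - (c - b) := by ring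
          rw [hmc]
          exact dvd_sub h2 hc2
        exact IsCoprime.mul_dvd ⟨u, v, huv⟩ h1' h2'
      · intro h
        have h1' : (d : ℤ) ^ s ∣ (m : ℤ) - c := (dvd_mul_right _ _).trans h
        have h2' : (e : ℤ) ^ s ∣ (m : ℤ) - c := (dvd_mul_left _ _).trans h
        constructor
        · have : (d : ℤ) ^ s ∣ (m : ℤ) := by
            have hm : (m : ℤ) = ((m : ℤ) - c) + c := by ring
            rw [hm]
            exact dvd_add h1' hc1
          exact_mod_cast this
        · have hmb : (m : ℤ) - b = ((m : ℤ) - c) + (c - b) := by ring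
          rw [hmb]
          exact dvd_add h2' hc2
    have hde : (d * e) ^ s ∣ n ^ s :=
      pow_dvd_pow_of_dvd (Nat.Coprime.mul_dvd_of_dvd_of_dvd hcop hd he) s
    have hTL : (d * e) ^ s * (n ^ s / (d * e) ^ s) = n ^ s := Nat.mul_div_cancel' hde
    have hT0 : 0 < (d * e) ^ s := by
      have := Nat.pos_of_dvd_of_pos hd hn
      have := Nat.pos_of_dvd_of_pos he hn
      positivity
    have := count_residue_Icc (T := (d * e) ^ s) (L := n ^ s / (d * e) ^ s) hT0 c
    rw [hTL] at this
    rw [← this]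
    congr 1
    ext m
    simp only [Finset.mem_filter, Finset.mem_Icc, hiff]
  · rw [if_neg hcop]
    rw [Finset.card_eq_zero, Finset.filter_eq_empty_iff]
    intro m hm
    rintro ⟨h1, h2⟩
    obtain ⟨p, hp, hpg⟩ := Nat.exists_prime_and_dvd (fun h => hcop h)
    have hpd : p ∣ d := hpg.trans (Nat.gcd_dvd_left d e)
    have hpe : p ∣ e := hpg.trans (Nat.gcd_dvd_right d e)
    apply hb p hp hpe
    have hpm : (p : ℤ) ^ s ∣ (m : ℤ) := by
      have : p ^ s ∣ m := (pow_dvd_pow_of_dvd hpd s).trans h1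
      exact_mod_cast Int.natCast_dvd_natCast.mpr this
    have hpmb : (p : ℤ) ^ s ∣ (m : ℤ) - b := by
      refine dvd_trans ?_ h2
      have : (p : ℤ) ∣ (e : ℤ) := Int.natCast_dvd_natCast.mpr hpe
      exact pow_dvd_pow_of_dvd this s
    have := dvd_sub hpm hpmb
    simpa using this

lemma Ncount_formula {s n e : ℕ} (hs : 0 < s) (hn : 0 < n) (he : e ∣ n) {b : ℤ}
    (hb : ∀ p : ℕ, p.Prime → p ∣ e → ¬ (p : ℤ) ^ s ∣ b) :
    (((Finset.Icc 1 (n ^ s)).filter (fun m : ℕ =>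
        (∀ p : ℕ, p.Prime → p ∣ n → ¬ p ^ s ∣ m) ∧ (e : ℤ) ^ s ∣ (m : ℤ) - b)).card : ℤ)
    = ∑ d ∈ n.divisors, (μ d : ℤ) *
        (if Nat.Coprime d e then ((n ^ s / (d * e) ^ s : ℕ) : ℤ) else 0) := by
  rw [Finset.card_filter, Nat.cast_sum]
  simp only [Nat.cast_ite, Nat.cast_one, Nat.cast_zero]
  have hsplit : ∀ m : ℕ, (if ((∀ p : ℕ, p.Prime → p ∣ n → ¬ p ^ s ∣ m)
        ∧ (e : ℤ) ^ s ∣ (m : ℤ) - b) then (1 : ℤ) else 0)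
      = ∑ d ∈ n.divisors, ((if d ^ s ∣ m then (μ d : ℤ) else 0)
          * (if (e : ℤ) ^ s ∣ (m : ℤ) - b then (1 : ℤ) else 0)) := by
    intro m
    rw [← Finset.sum_mul, moebius_indicator hs hn]
    by_cases h1 : (∀ p : ℕ, p.Prime → p ∣ n → ¬ p ^ s ∣ m) <;>
      by_cases h2 : ((e : ℤ) ^ s ∣ (m : ℤ) - b) <;> simp [h1, h2]
  rw [Finset.sum_congr rfl (fun m _ => hsplit m), Finset.sum_comm]
  apply Finset.sum_congr rfl
  intro d hd
  obtain ⟨hdn, _⟩ := Nat.mem_divisors.mp hd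
  have hic := inner_count hs hn hdn he hb
  rw [show (if Nat.Coprime d e then ((n ^ s / (d * e) ^ s : ℕ) : ℤ) else 0)
      = ((((Finset.Icc 1 (n ^ s)).filter
        (fun m : ℕ => d ^ s ∣ m ∧ (e : ℤ) ^ s ∣ (m : ℤ) - b)).card : ℕ) : ℤ) by
    rw [hic]; split <;> simp]
  rw [Finset.card_filter, Nat.cast_sum, Finset.mul_sum]
  apply Finset.sum_congr rfl
  intro m _
  by_cases h1 : d ^ s ∣ m <;> by_cases h2 : ((e : ℤ) ^ s ∣ (m : ℤ) - b) <;>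
    simp [h1, h2]

lemma residue_iff {E m b : ℕ} (hE : 0 < E) (hm : 1 ≤ m) (hb1 : 1 ≤ b) (hbE : b ≤ E) :
    ((m - 1) % E + 1 = b) ↔ (E : ℤ) ∣ (m : ℤ) - (b : ℤ) := by
  have hmod : (m - 1) % E < E := Nat.mod_lt _ hE
  have hkey : E * ((m - 1) / E) + (m - 1) % E = m - 1 := Nat.div_add_mod _ _
  have hkeyZ : (E : ℤ) * ((m - 1) / E : ℕ) + ((m - 1) % E : ℕ) = (m : ℤ) - 1 := by
    have h1 : ((E * ((m - 1) / E) + (m - 1) % E : ℕ) : ℤ) = ((m - 1 : ℕ) : ℤ) :=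
      congrArg (fun x : ℕ => (x : ℤ)) hkey
    rw [Nat.cast_add, Nat.cast_mul, Nat.cast_sub hm] at h1
    exact h1
  constructor
  · intro h
    refine ⟨((m - 1) / E : ℕ), ?_⟩
    have hbz : (b : ℤ) = ((m - 1) % E : ℕ) + 1 := by exact_mod_cast h.symm
    rw [hbz]
    linarith
  · intro h
    have h2 : (E : ℤ) ∣ ((m - 1 : ℕ) : ℤ) - ((b - 1 : ℕ) : ℤ) := by
      have : ((m - 1 : ℕ) : ℤ) - ((b - 1 : ℕ) : ℤ) = (m : ℤ) - (b : ℤ) := by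
        push_cast [Nat.cast_sub hm, Nat.cast_sub hb1]
        ring
      rw [this]
      exact h
    have h3 : (b - 1) ≡ (m - 1) [MOD E] := (Nat.modEq_iff_dvd).mpr h2
    have h4 : (b - 1) % E = (m - 1) % E := h3
    have h5 : (b - 1) % E = b - 1 := Nat.mod_eq_of_lt (by omega)
    omega

lemma partition {s n e : ℕ} (hs : 0 < s) (hn : 0 < n) (he : e ∣ n) :
    klee s (n ^ s) = ∑ b ∈ (Finset.Icc 1 (e ^ s)).filter
        (fun b => ∀ p : ℕ, p.Prime → p ∣ e → ¬ p ^ s ∣ b),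
      ((Finset.Icc 1 (n ^ s)).filter (fun m : ℕ =>
        (∀ p : ℕ, p.Prime → p ∣ n → ¬ p ^ s ∣ m) ∧ (e : ℤ) ^ s ∣ (m : ℤ) - (b : ℤ))).card := by
  have he0 : 0 < e := Nat.pos_of_dvd_of_pos he hn
  have hE : 0 < e ^ s := pow_pos he0 s
  have hS : klee s (n ^ s) = ((Finset.Icc 1 (n ^ s)).filter
      (fun m => ∀ p : ℕ, p.Prime → p ∣ n → ¬ p ^ s ∣ m)).card := by
    unfold klee
    congr 1
    apply Finset.filter_congr
    intro m _
    simpa using cond_nat_iff hs hn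
  rw [hS]
  rw [Finset.card_eq_sum_card_fiberwise (f := fun m => (m - 1) % e ^ s + 1)
    (t := (Finset.Icc 1 (e ^ s)).filter (fun b => ∀ p : ℕ, p.Prime → p ∣ e → ¬ p ^ s ∣ b))
    ?_]
  · apply Finset.sum_congr rfl
    intro b hb
    simp only [Finset.mem_filter, Finset.mem_Icc] at hb
    congr 1
    ext m
    simp only [Finset.mem_filter, Finset.mem_Icc]
    constructor
    · rintro ⟨⟨⟨hm1, hm2⟩, hc⟩, hf⟩
      exact ⟨⟨hm1, hm2⟩, hc, by exact_mod_cast (residue_iff hE hm1 hb.1.1 hb.1.2).mp hf⟩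
    · rintro ⟨⟨hm1, hm2⟩, hc, hdvd⟩
      exact ⟨⟨⟨hm1, hm2⟩, hc⟩, (residue_iff hE hm1 hb.1.1 hb.1.2).mpr (by exact_mod_cast hdvd)⟩
  · intro m hm
    simp only [Finset.mem_coe, Finset.mem_filter, Finset.mem_Icc] at hm ⊢
    obtain ⟨⟨hm1, hm2⟩, hc⟩ := hm
    have hmod : (m - 1) % e ^ s < e ^ s := Nat.mod_lt _ hE
    refine ⟨⟨Nat.le_add_left 1 _, Nat.succ_le_of_lt hmod⟩, ?_⟩
    intro p hp hpe hpdvd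
    have hq : e ^ s * ((m - 1) / e ^ s) + (m - 1) % e ^ s = m - 1 := Nat.div_add_mod _ _
    have hpes : p ^ s ∣ e ^ s := pow_dvd_pow_of_dvd hpe s
    apply hc p hp (hpe.trans he)
    have hm' : m = e ^ s * ((m - 1) / e ^ s) + ((m - 1) % e ^ s + 1) := by omega
    rw [hm']
    exact dvd_add (dvd_mul_of_dvd_left hpes _) hpdvd

lemma equidist {s n e : ℕ} (hs : 0 < s) (hn : 0 < n) (he : e ∣ n) {b : ℤ}
    (hb : ∀ p : ℕ, p.Prime → p ∣ e → ¬ (p : ℤ) ^ s ∣ b) :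
    ((Finset.Icc 1 (n ^ s)).filter (fun m : ℕ =>
        (∀ p : ℕ, p.Prime → p ∣ n → ¬ p ^ s ∣ m) ∧ (e : ℤ) ^ s ∣ (m : ℤ) - b)).card
      * klee s (e ^ s) = klee s (n ^ s) := by
  have he0 : 0 < e := Nat.pos_of_dvd_of_pos he hn
  have hBcard : ((Finset.Icc 1 (e ^ s)).filter
      (fun b => ∀ p : ℕ, p.Prime → p ∣ e → ¬ p ^ s ∣ b)).card = klee s (e ^ s) := by
    unfold klee
    congr 1
    apply Finset.filter_congr
    intro m _
    simpa using (cond_nat_iff hs he0).symm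
  have hNb : ∀ b' ∈ (Finset.Icc 1 (e ^ s)).filter
      (fun b => ∀ p : ℕ, p.Prime → p ∣ e → ¬ p ^ s ∣ b),
      ((Finset.Icc 1 (n ^ s)).filter (fun m : ℕ =>
        (∀ p : ℕ, p.Prime → p ∣ n → ¬ p ^ s ∣ m) ∧ (e : ℤ) ^ s ∣ (m : ℤ) - (b' : ℤ))).card
      = ((Finset.Icc 1 (n ^ s)).filter (fun m : ℕ =>
        (∀ p : ℕ, p.Prime → p ∣ n → ¬ p ^ s ∣ m) ∧ (e : ℤ) ^ s ∣ (m : ℤ) - b)).card := by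
    intro b' hb'
    simp only [Finset.mem_filter, Finset.mem_Icc] at hb'
    have hb'' : ∀ p : ℕ, p.Prime → p ∣ e → ¬ (p : ℤ) ^ s ∣ (b' : ℤ) := by
      intro p hp hpe hd
      apply hb'.2 p hp hpe
      exact_mod_cast hd
    have h := (Ncount_formula hs hn he hb'').trans (Ncount_formula hs hn he hb).symm
    exact_mod_cast h
  rw [partition hs hn he, Finset.sum_congr rfl hNb, Finset.sum_const, smul_eq_mul, hBcard]
  exact mul_comm _ _

theorem stmt_5 (k n s : ℕ) (hk : 0 < k) (hn : 0 < n) (hs : 0 < s)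
    (a : Fin k → ℤ) (ha : ∀ i, sPowGcd s (Int.gcd (a i) ((n : ℤ) ^ s)) = 1) :
    (∑ m ∈ (Fintype.piFinset fun _ : Fin k => Finset.Icc 1 (n ^ s)).filter
        (fun m => ∀ i, sPowGcd s (Nat.gcd (m i) (n ^ s)) = 1),
      (sPowGcd s
        (Nat.gcd (Finset.univ.gcd fun i => ((m i : ℤ) - a i).natAbs) (n ^ s)) : ℚ))
    = (klee s (n ^ s) : ℚ) ^ k *
        ∑ d ∈ n.divisors, 1 / (klee s (d ^ s) : ℚ) ^ (k - 1) := by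
  classical
  have haP : ∀ i, ∀ p : ℕ, p.Prime → p ∣ n → ¬ (p : ℤ) ^ s ∣ a i := fun i =>
    (cond_int_iff hs hn).mp (ha i)
  -- step A
  set Sfull : Finset ℕ := (Finset.Icc 1 (n ^ s)).filter
    (fun x => ∀ p : ℕ, p.Prime → p ∣ n → ¬ p ^ s ∣ x) with hSfull
  have hsetP : (Fintype.piFinset fun _ : Fin k => Finset.Icc 1 (n ^ s)).filter
      (fun m => ∀ i, sPowGcd s (Nat.gcd (m i) (n ^ s)) = 1)
      = Fintype.piFinset (fun _ : Fin k => Sfull) := by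
    ext m
    simp only [Finset.mem_filter, Fintype.mem_piFinset, hSfull]
    constructor
    · rintro ⟨h1, h2⟩
      exact fun i => ⟨h1 i, (cond_nat_iff hs hn).mp (h2 i)⟩
    · intro h
      exact ⟨fun i => (h i).1, fun i => (cond_nat_iff hs hn).mpr (h i).2⟩
  rw [hsetP]
  -- step B : rewrite the weight
  have hweight : ∀ m : Fin k → ℕ,
      ((sPowGcd s (Nat.gcd (Finset.univ.gcd fun i => ((m i : ℤ) - a i).natAbs) (n ^ s))) : ℚ)
      = ∑ e ∈ n.divisors, if (∀ i, (e : ℤ) ^ s ∣ (m i : ℤ) - a i)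
          then (klee s (e ^ s) : ℚ) else 0 := by
    intro m
    set G : ℕ := Finset.univ.gcd fun i => ((m i : ℤ) - a i).natAbs with hG
    have hGdvd : ∀ e : ℕ, e ^ s ∣ G ↔ ∀ i, (e : ℤ) ^ s ∣ (m i : ℤ) - a i := by
      intro e
      rw [hG, Finset.dvd_gcd_iff]
      constructor
      · intro h i
        have := h i (Finset.mem_univ i)
        have h2 : ((e ^ s : ℕ) : ℤ) ∣ (m i : ℤ) - a i := Int.natCast_dvd.mpr this
        exact_mod_cast h2
      · intro h i _
        refine Int.natCast_dvd.mp ?_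
        exact_mod_cast h i
    have hz := weight_decomp (n := n) hs hn G
    have hq : ((sPowGcd s (Nat.gcd G (n ^ s))) : ℚ)
        = ∑ e ∈ n.divisors, if e ^ s ∣ G then (klee s (e ^ s) : ℚ) else 0 := by
      exact_mod_cast congrArg (fun z : ℤ => (z : ℚ)) hz
    rw [hq]
    apply Finset.sum_congr rfl
    intro e _
    by_cases hcase : e ^ s ∣ G
    · rw [if_pos hcase, if_pos ((hGdvd e).mp hcase)]
    · rw [if_neg hcase, if_neg (fun hc => hcase ((hGdvd e).mpr hc))]
  rw [Finset.sum_congr rfl (fun m _ => hweight m), Finset.sum_comm, Finset.mul_sum]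
  -- step C : per divisor e
  apply Finset.sum_congr rfl
  intro e he
  obtain ⟨hen, _⟩ := Nat.mem_divisors.mp he
  have he0 : 0 < e := Nat.pos_of_dvd_of_pos hen hn
  have hKe0 : (klee s (e ^ s) : ℚ) ≠ 0 :=
    Nat.cast_ne_zero.mpr (klee_pos (pow_pos he0 s)).ne'
  have hK0 : (klee s (n ^ s) : ℚ) ≠ 0 :=
    Nat.cast_ne_zero.mpr (klee_pos (pow_pos hn s)).ne'
  rw [← Finset.sum_filter]
  have hPfilter : (Fintype.piFinset (fun _ : Fin k => Sfull)).filter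
      (fun m => ∀ i, (e : ℤ) ^ s ∣ (m i : ℤ) - a i)
      = Fintype.piFinset (fun i : Fin k => Sfull.filter
          (fun x : ℕ => (e : ℤ) ^ s ∣ (x : ℤ) - a i)) := by
    ext m
    simp only [Finset.mem_filter, Fintype.mem_piFinset]
    constructor
    · rintro ⟨h1, h2⟩
      exact fun i => ⟨h1 i, h2 i⟩
    · intro h
      exact ⟨fun i => (h i).1, fun i => (h i).2⟩
  rw [hPfilter, Finset.sum_const, Fintype.card_piFinset]
  have hcardi : ∀ i : Fin k,
      ((Sfull.filter (fun x : ℕ => (e : ℤ) ^ s ∣ (x : ℤ) - a i)).card : ℚ)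
      = (klee s (n ^ s) : ℚ) / (klee s (e ^ s) : ℚ) := by
    intro i
    have hbi : ∀ p : ℕ, p.Prime → p ∣ e → ¬ (p : ℤ) ^ s ∣ a i :=
      fun p hp hpe => haP i p hp (hpe.trans hen)
    have heq := equidist hs hn hen hbi
    have hsetEq : Sfull.filter (fun x : ℕ => (e : ℤ) ^ s ∣ (x : ℤ) - a i)
        = (Finset.Icc 1 (n ^ s)).filter (fun m : ℕ =>
          (∀ p : ℕ, p.Prime → p ∣ n → ¬ p ^ s ∣ m) ∧ (e : ℤ) ^ s ∣ (m : ℤ) - a i) := by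
      rw [hSfull, Finset.filter_filter]
    rw [hsetEq]
    rw [eq_div_iff hKe0]
    exact_mod_cast congrArg (fun x : ℕ => (x : ℚ)) heq
  have hprod : (∏ i : Fin k,
      (Sfull.filter (fun x : ℕ => (e : ℤ) ^ s ∣ (x : ℤ) - a i)).card : ℚ)
      = ((klee s (n ^ s) : ℚ) / (klee s (e ^ s) : ℚ)) ^ k := by
    push_cast
    rw [Finset.prod_congr rfl (fun i _ => hcardi i), Finset.prod_const,
      Finset.card_univ, Fintype.card_fin]
  rw [nsmul_eq_mul]
  push_cast
  rw [hprod]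
  -- final algebra
  have hKe : (klee s (e ^ s) : ℚ) ^ k = (klee s (e ^ s) : ℚ) ^ (k - 1) * klee s (e ^ s) := by
    rw [← pow_succ]
    congr 1
    omega
  rw [div_pow, hKe]
  field_simp
end

section
/- Let s be a positive integer and let n = 2^s · a where a is an odd positive integer that is s-free. Then Φ_s(n) is odd. -/
/-- `a` is `s`-free: no `s`-th power `l ^ s` with `l > 1` divides `a`. -/
def sFree (s a : ℕ) : Prop := ∀ l : ℕ, 1 < l → ¬ l ^ s ∣ a

lemma sPowGcd_eq_one_iff_s15 (s g : ℕ) (hs : 0 < s) (hg : 0 < g) :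
    sPowGcd s g = 1 ↔ sFree s g := by
  constructor
  · intro h l hl hdvd
    unfold sPowGcd at h
    have hlg : l ≤ g := le_trans (Nat.le_self_pow hs.ne' l) (Nat.le_of_dvd hg hdvd)
    have hle : l ≤ Nat.findGreatest (fun l => l ^ s ∣ g) g :=
      Nat.le_findGreatest (P := fun l => l ^ s ∣ g) hlg hdvd
    have h1 : 1 < Nat.findGreatest (fun l => l ^ s ∣ g) g := lt_of_lt_of_le hl hle
    have h2 : 1 < (Nat.findGreatest (fun l => l ^ s ∣ g) g) ^ s :=
      Nat.one_lt_pow hs.ne' h1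
    omega
  · intro h
    have h1 : 1 ≤ Nat.findGreatest (fun l => l ^ s ∣ g) g :=
      Nat.le_findGreatest hg (by simp)
    have h2 : Nat.findGreatest (fun l => l ^ s ∣ g) g ≤ 1 := by
      by_contra hc
      push_neg at hc
      have hspec : (Nat.findGreatest (fun l => l ^ s ∣ g) g) ^ s ∣ g := by
        have := Nat.findGreatest_spec (P := fun l => l ^ s ∣ g) hg (by simp)
        exact this
      exact h _ hc hspec
    have : Nat.findGreatest (fun l => l ^ s ∣ g) g = 1 := le_antisymm h2 h1
    simp [sPowGcd, this]

theorem stmt_15 (s a : ℕ) (hs : 0 < s) (ha : 0 < a) (haodd : Odd a) (hafree : sFree s a) :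
    Odd (klee s (2 ^ s * a)) := by
  set n := 2 ^ s * a with hn
  have hnpos : 0 < n := by positivity
  have h2n : 2 ^ s ∣ n := ⟨a, rfl⟩
  -- the condition is equivalent to ¬ 2^s ∣ m
  have key : ∀ m ∈ Finset.Icc 1 n,
      (sPowGcd s (Nat.gcd m n) = 1 ↔ ¬ (2 ^ s ∣ m)) := by
    intro m hm
    simp only [Finset.mem_Icc] at hm
    have hgpos : 0 < Nat.gcd m n := Nat.gcd_pos_of_pos_right _ hnpos
    rw [sPowGcd_eq_one_iff_s15 s _ hs hgpos]
    constructor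
    · intro h hdvd
      exact h 2 one_lt_two (Nat.dvd_gcd hdvd h2n)
    · intro h l hl hdvd
      obtain ⟨p, hp, hpl⟩ := Nat.exists_prime_and_dvd (by omega : l ≠ 1)
      have hpd : p ^ s ∣ Nat.gcd m n := dvd_trans (pow_dvd_pow_of_dvd hpl s) hdvd
      by_cases hp2 : p = 2
      · exact h (dvd_trans (hp2 ▸ hpd) (Nat.gcd_dvd_left _ _))
      · have hcop : Nat.Coprime p 2 :=
          (Nat.coprime_primes hp Nat.prime_two).mpr hp2
        have hpn : p ^ s ∣ 2 ^ s * a := dvd_trans hpd (Nat.gcd_dvd_right _ _)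
        have : p ^ s ∣ a := (Nat.Coprime.pow s s hcop).dvd_of_dvd_mul_left hpn
        exact hafree p hp.one_lt this
  unfold klee
  rw [Finset.filter_congr key]
  rw [Finset.filter_not]
  rw [Finset.card_sdiff_of_subset (Finset.filter_subset _ _)]
  have hIcc : Finset.Icc 1 n = Finset.Ioc 0 n := rfl
  have hcount : ((Finset.Icc 1 n).filter (fun m => 2 ^ s ∣ m)).card = n / 2 ^ s := by
    rw [hIcc]
    simpa using Nat.Ioc_filter_dvd_card_eq_div n (2 ^ s)
  rw [hcount, Nat.card_Icc]
  have hdiv : n / 2 ^ s = a := by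
    rw [hn, Nat.mul_div_cancel_left _ (by positivity)]
  rw [hdiv]
  have heq : n + 1 - 1 - a = (2 ^ s - 1) * a := by
    rw [Nat.sub_mul, one_mul, hn]
    omega
  rw [heq]
  exact (Nat.Even.sub_odd Nat.one_le_two_pow
    (Nat.even_pow.mpr ⟨even_two, hs.ne'⟩) odd_one).mul haodd
end
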